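/- For every k with 1 ≤ k ≤ n, one has the factorization f_k = f_{k-1}^p - (C h_k) · f_{k-1} in Polynomial S, where h_k = (f_{k-1}.eval y_k)^{p-1} and C h_k denotes the constant polynomial h_k. -/

import Mathlib

open MvPolynomial

/-- `V p n k` : the set of `𝔽_p`-linear combinations of the first `k` variables. -/
noncomputable def V (p n k : ℕ) [Fact p.Prime] : Finset (MvPolynomial (Fin n) (ZMod p)) :=
  (Finset.univ : Finset (Fin n → ZMod p)).image
    (fun c => ∑ j ∈ Finset.univ.filter (fun j : Fin n => j.val < k), C (c j) * X j)

/-- `f p n k = ∏_{u ∈ V_k} (X - C u)`. -/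
noncomputable def f (p n k : ℕ) [Fact p.Prime] :
    Polynomial (MvPolynomial (Fin n) (ZMod p)) :=
  ∏ u ∈ V p n k, (Polynomial.X - Polynomial.C u)

/-- Dickson invariant `d_{k,i}`. -/
noncomputable def d (p n k i : ℕ) [Fact p.Prime] : MvPolynomial (Fin n) (ZMod p) :=
  (-1) ^ (k - i) * (f p n k).coeff (p ^ i)

/-- Borel generator: `hGen p n j` is `h_{j+1}` of the paper. -/
noncomputable def hGen (p n : ℕ) [Fact p.Prime] (j : Fin n) : MvPolynomial (Fin n) (ZMod p) :=
  (Polynomial.eval (X j) (f p n j.val)) ^ (p - 1)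

/-- Action of `GL_n(𝔽_p)` on `S` by linear substitution `g · y_j = ∑_i g_{ij} y_i`. -/
noncomputable def gact (p n : ℕ) [Fact p.Prime] (g : GL (Fin n) (ZMod p)) :
    MvPolynomial (Fin n) (ZMod p) →ₐ[ZMod p] MvPolynomial (Fin n) (ZMod p) :=
  aeval (fun j : Fin n => ∑ i : Fin n, C ((g : Matrix (Fin n) (Fin n) (ZMod p)) i j) * X i)

namespace Stmt2Aux

variable {p n : ℕ} [Fact p.Prime]

lemma zero_mem_V {m : ℕ} : (0 : MvPolynomial (Fin n) (ZMod p)) ∈ V p n m := by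
  simp only [V, Finset.mem_image]
  exact ⟨0, Finset.mem_univ _, by simp⟩

lemma sub_mem_V {m : ℕ} {u v : MvPolynomial (Fin n) (ZMod p)}
    (hu : u ∈ V p n m) (hv : v ∈ V p n m) : u - v ∈ V p n m := by
  simp only [V, Finset.mem_image] at hu hv ⊢
  obtain ⟨c, -, rfl⟩ := hu
  obtain ⟨c', -, rfl⟩ := hv
  exact ⟨c - c', Finset.mem_univ _, by
    rw [← Finset.sum_sub_distrib]
    exact Finset.sum_congr rfl fun j _ => by simp [sub_mul]⟩

lemma coeff_single_eq_zero {m : ℕ} {u : MvPolynomial (Fin n) (ZMod p)}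
    (hu : u ∈ V p n m) {j : Fin n} (hj : ¬ j.val < m) :
    MvPolynomial.coeff (Finsupp.single j 1) u = 0 := by
  simp only [V, Finset.mem_image] at hu
  obtain ⟨c, -, rfl⟩ := hu
  rw [MvPolynomial.coeff_sum]
  refine Finset.sum_eq_zero fun i hi => ?_
  rw [Finset.mem_filter] at hi
  have hij : i ≠ j := fun h => hj (h ▸ hi.2)
  rw [MvPolynomial.coeff_C_mul, MvPolynomial.coeff_X', if_neg, mul_zero]
  intro h
  exact hij (by simpa using (Finsupp.single_left_inj (one_ne_zero)).mp h)

lemma filter_succ {m : ℕ} (hm : m < n) :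
    Finset.univ.filter (fun j : Fin n => j.val < m + 1)
      = insert ⟨m, hm⟩ (Finset.univ.filter (fun j : Fin n => j.val < m)) := by
  ext j
  simp only [Finset.mem_filter, Finset.mem_insert, Finset.mem_univ, true_and, Fin.ext_iff]
  omega

lemma V_succ {m : ℕ} (hm : m < n) :
    V p n (m + 1) = ((Finset.univ : Finset (ZMod p)) ×ˢ V p n m).image
      (fun au : ZMod p × MvPolynomial (Fin n) (ZMod p) =>
        au.2 + C au.1 * X (⟨m, hm⟩ : Fin n)) := by
  have hnotmem : (⟨m, hm⟩ : Fin n) ∉ Finset.univ.filter (fun j : Fin n => j.val < m) := by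
    simp
  ext x
  simp only [V, Finset.mem_image, Finset.mem_product, Finset.mem_univ, true_and]
  constructor
  · rintro ⟨c, rfl⟩
    refine ⟨(c ⟨m, hm⟩, ∑ j ∈ Finset.univ.filter (fun j : Fin n => j.val < m), C (c j) * X j),
      ⟨c, rfl⟩, ?_⟩
    rw [filter_succ hm, Finset.sum_insert hnotmem]
    ring
  · rintro ⟨⟨a, u⟩, ⟨c, rfl⟩, rfl⟩
    refine ⟨Function.update c ⟨m, hm⟩ a, ?_⟩
    rw [filter_succ hm, Finset.sum_insert hnotmem, Function.update_self]
    have : ∀ j ∈ Finset.univ.filter (fun j : Fin n => j.val < m),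
        C (Function.update c (⟨m, hm⟩ : Fin n) a j) * X j = C (c j) * X j := by
      intro j hj
      rw [Finset.mem_filter] at hj
      rw [Function.update_of_ne (by simp [Fin.ext_iff]; omega)]
    rw [Finset.sum_congr rfl this]
    ring

lemma injOn_phi {m : ℕ} (hm : m < n) :
    Set.InjOn (fun au : ZMod p × MvPolynomial (Fin n) (ZMod p) =>
        au.2 + C au.1 * X (⟨m, hm⟩ : Fin n))
      (((Finset.univ : Finset (ZMod p)) ×ˢ V p n m : Finset _) : Set _) := by
  rintro ⟨a, u⟩ h1 ⟨a', u'⟩ h2 h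
  simp only [Finset.coe_product, Set.mem_prod, Finset.mem_coe, Finset.mem_univ, true_and,
    Finset.coe_univ, Set.mem_univ] at h1 h2
  simp only at h
  have hcoeff : ∀ (b : ZMod p) (v : MvPolynomial (Fin n) (ZMod p)), v ∈ V p n m →
      MvPolynomial.coeff (Finsupp.single (⟨m, hm⟩ : Fin n) 1)
        (v + C b * X (⟨m, hm⟩ : Fin n)) = b := by
    intro b v hv
    rw [MvPolynomial.coeff_add, coeff_single_eq_zero hv (by simp),
      MvPolynomial.coeff_C_mul, MvPolynomial.coeff_X, if_pos rfl, mul_one, zero_add]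
  have ha : a = a' := by
    have := congrArg (MvPolynomial.coeff (Finsupp.single (⟨m, hm⟩ : Fin n) 1)) h
    rwa [hcoeff a u h1, hcoeff a' u' h2] at this
  subst ha
  have hu : u = u' := by
    have := h
    rwa [add_left_inj] at this
  simp [hu]

lemma card_V : ∀ {m : ℕ}, m ≤ n → (V p n m).card = p ^ m := by
  intro m
  induction m with
  | zero =>
    intro _
    have hconst : ∀ c : Fin n → ZMod p,
        ∑ j ∈ Finset.univ.filter (fun j : Fin n => j.val < 0), C (c j) * X j
          = (0 : MvPolynomial (Fin n) (ZMod p)) := by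
      intro c
      refine Finset.sum_eq_zero fun j hj => ?_
      rw [Finset.mem_filter] at hj
      omega
    have : V p n 0 = {0} := by
      rw [V]
      rw [Finset.image_congr (fun c _ => hconst c)]
      exact Finset.image_const Finset.univ_nonempty 0
    simp [this]
  | succ m ih =>
    intro hm1
    have hm : m < n := hm1
    have hV := V_succ (p := p) hm
    rw [hV, Finset.card_image_of_injOn (injOn_phi hm), Finset.card_product,
      Finset.card_univ, ZMod.card, ih (le_of_lt hm), pow_succ, mul_comm]

lemma monic_f {m : ℕ} : (f p n m).Monic :=
  Polynomial.monic_prod_of_monic _ _ fun u _ => Polynomial.monic_X_sub_C u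

lemma natDegree_f {m : ℕ} : (f p n m).natDegree = (V p n m).card := by
  rw [f, Polynomial.natDegree_prod_of_monic _ _ fun u _ => Polynomial.monic_X_sub_C u]
  simp [Polynomial.natDegree_X_sub_C]

lemma eval_f_eq_zero {m : ℕ} {u : MvPolynomial (Fin n) (ZMod p)} (hu : u ∈ V p n m) :
    (f p n m).eval u = 0 := by
  rw [f, Polynomial.eval_prod]
  exact Finset.prod_eq_zero hu (by simp)

lemma neg_one_pow_card {m : ℕ} (hm : m ≤ n) :
    ((-1 : MvPolynomial (Fin n) (ZMod p)) ^ (V p n m).card) = -1 := by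
  rw [card_V hm]
  rcases (Fact.out : p.Prime).eq_two_or_odd' with hp | hp
  · subst hp
    haveI : CharP (MvPolynomial (Fin n) (ZMod 2)) 2 := inferInstance
    rw [CharTwo.neg_eq 1, one_pow]
  · exact Odd.neg_one_pow (hp.pow)

/-- The translation lemma: `f_m(X - s) = f_m(X) - f_m(s)`. -/
lemma comp_X_sub_C {m : ℕ} (hm : m ≤ n) (s : MvPolynomial (Fin n) (ZMod p)) :
    (f p n m).comp (Polynomial.X - Polynomial.C s)
      = f p n m - Polynomial.C ((f p n m).eval s) := by
  set P := f p n m with hP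
  set N := (V p n m).card with hN
  have hNpos : 0 < N := Finset.card_pos.mpr ⟨0, zero_mem_V⟩
  set Q := P.comp (Polynomial.X - Polynomial.C s) - P + Polynomial.C (P.eval s) with hQ
  have hcompmonic : (P.comp (Polynomial.X - Polynomial.C s)).Monic :=
    (monic_f).comp (Polynomial.monic_X_sub_C s) (by simp)
  have hdegcomp : (P.comp (Polynomial.X - Polynomial.C s)).natDegree = N := by
    rw [Polynomial.natDegree_comp, natDegree_f, Polynomial.natDegree_X_sub_C, mul_one]
  have hroots : ∀ u ∈ V p n m, Q.eval u = 0 := by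
    intro u hu
    have h1 : (P.comp (Polynomial.X - Polynomial.C s)).eval u = P.eval (u - s) := by
      rw [Polynomial.eval_comp]; simp
    have h2 : P.eval (u - s) = (-1) ^ N * P.eval s := by
      rw [hP, f, Polynomial.eval_prod, Polynomial.eval_prod]
      have hre : ∏ w ∈ V p n m, ((u - s) - w)
          = ∏ w ∈ V p n m, (w - s) := by
        refine Finset.prod_nbij' (fun w => u - w) (fun w => u - w) ?_ ?_ ?_ ?_ ?_
        · intro w hw; exact sub_mem_V hu hw
        · intro w hw; exact sub_mem_V hu hw
        · intro w _; ring
        · intro w _; ring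
        · intro w _; ring
      calc (∏ w ∈ V p n m, Polynomial.eval (u - s) (Polynomial.X - Polynomial.C w))
          = ∏ w ∈ V p n m, ((u - s) - w) := by
            simp [Polynomial.eval_sub]
        _ = ∏ w ∈ V p n m, (w - s) := hre
        _ = ∏ w ∈ V p n m, ((-1) * (s - w)) := by
            exact Finset.prod_congr rfl fun w _ => by ring
        _ = (-1) ^ N * ∏ w ∈ V p n m, (s - w) := by
            rw [Finset.prod_mul_distrib, Finset.prod_const, hN]
        _ = (-1) ^ N * ∏ w ∈ V p n m, Polynomial.eval s (Polynomial.X - Polynomial.C w) := by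
            simp [Polynomial.eval_sub]
    rw [hQ, Polynomial.eval_add, Polynomial.eval_sub, h1, h2, Polynomial.eval_C,
      eval_f_eq_zero hu, neg_one_pow_card hm]
    ring
  have hdegQ : Q.natDegree < N := by
    have hdP : P.degree = (N : WithBot ℕ) := by
      rw [Polynomial.degree_eq_natDegree (monic_f).ne_zero, natDegree_f]
    have hdC : (P.comp (Polynomial.X - Polynomial.C s)).degree = (N : WithBot ℕ) := by
      rw [Polynomial.degree_eq_natDegree hcompmonic.ne_zero, hdegcomp]
    have hsub : (P.comp (Polynomial.X - Polynomial.C s) - P).degree < (N : WithBot ℕ) := by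
      have := Polynomial.degree_sub_lt (hdC.trans hdP.symm) hcompmonic.ne_zero
        (by rw [hcompmonic.leadingCoeff, (monic_f (p := p) (n := n) (m := m)).leadingCoeff])
      rwa [hdC] at this
    have hCc : (Polynomial.C (P.eval s)).degree < (N : WithBot ℕ) :=
      lt_of_le_of_lt (Polynomial.degree_C_le) (by exact_mod_cast hNpos)
    have : Q.degree < (N : WithBot ℕ) :=
      lt_of_le_of_lt (Polynomial.degree_add_le _ _) (max_lt hsub hCc)
    by_cases hQz : Q = 0
    · simpa [hQz] using hNpos
    · exact (Polynomial.natDegree_lt_iff_degree_lt hQz).mpr this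
  have hQ0 : Q = 0 := Polynomial.eq_zero_of_natDegree_lt_card_of_eval_eq_zero' Q (V p n m)
    hroots (by rw [← hN]; exact hdegQ)
  have : P.comp (Polynomial.X - Polynomial.C s)
      - (P - Polynomial.C (P.eval s)) = Q := by rw [hQ]; ring
  rw [← sub_eq_zero, this, hQ0]

lemma eval_f_sub {m : ℕ} (hm : m ≤ n) (v s : MvPolynomial (Fin n) (ZMod p)) :
    (f p n m).eval (v - s) = (f p n m).eval v - (f p n m).eval s := by
  have := congrArg (Polynomial.eval v) (comp_X_sub_C hm s)
  rw [Polynomial.eval_comp] at this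
  simpa using this

lemma eval_f_zero' {m : ℕ} (hm : m ≤ n) : (f p n m).eval 0 = 0 := by
  have := eval_f_sub hm (0 : MvPolynomial (Fin n) (ZMod p)) 0
  simpa using this

lemma eval_f_add {m : ℕ} (hm : m ≤ n) (v s : MvPolynomial (Fin n) (ZMod p)) :
    (f p n m).eval (v + s) = (f p n m).eval v + (f p n m).eval s := by
  have h1 := eval_f_sub hm (v + s) s
  have h2 := eval_f_sub hm v s
  simp only [add_sub_cancel_right] at h1
  linear_combination -h1

lemma eval_f_nsmul {m : ℕ} (hm : m ≤ n) (c : ℕ) (x : MvPolynomial (Fin n) (ZMod p)) :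
    (f p n m).eval (c • x) = c • (f p n m).eval x := by
  induction c with
  | zero => simp [eval_f_zero' hm]
  | succ c ih => rw [succ_nsmul, succ_nsmul, eval_f_add hm, ih]

lemma monic_XpX : (Polynomial.X ^ p - Polynomial.X : Polynomial (ZMod p)).Monic := by
  have h1 : (1 : ℕ) < p := (Fact.out : p.Prime).one_lt
  have : (Polynomial.X : Polynomial (ZMod p)).degree
      < (Polynomial.X ^ p : Polynomial (ZMod p)).degree := by
    rw [Polynomial.degree_X_pow, Polynomial.degree_X]; exact_mod_cast h1
  exact (Polynomial.monic_X_pow p).sub_of_left this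

lemma prod_X_sub_C_zmod :
    ∏ a : ZMod p, (Polynomial.X - Polynomial.C a)
      = (Polynomial.X ^ p - Polynomial.X : Polynomial (ZMod p)) := by
  have h1 : (1 : ℕ) < p := (Fact.out : p.Prime).one_lt
  have hroots : (Polynomial.X ^ p - Polynomial.X : Polynomial (ZMod p)).roots
      = Finset.univ.val := by
    have := FiniteField.roots_X_pow_card_sub_X (ZMod p)
    rwa [ZMod.card p] at this
  have hcard : Multiset.card (Polynomial.X ^ p - Polynomial.X : Polynomial (ZMod p)).roots
      = (Polynomial.X ^ p - Polynomial.X : Polynomial (ZMod p)).natDegree := by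
    rw [hroots, FiniteField.X_pow_card_sub_X_natDegree_eq _ h1]
    simpa using (ZMod.card p)
  have := Polynomial.prod_multiset_X_sub_C_of_monic_of_roots_card_eq monic_XpX hcard
  rw [hroots] at this
  rw [← this, Finset.prod_eq_multiset_prod]

lemma prod_t_sub_phi {F : Type*} [CommRing F] (φ : ZMod p →+* F) (t : F) :
    ∏ a : ZMod p, (t - φ a) = t ^ p - t := by
  have := congrArg (Polynomial.eval₂RingHom φ t) (prod_X_sub_C_zmod (p := p))
  rw [map_prod, map_sub, map_pow] at this
  simpa using this

lemma prod_linear {F : Type*} [Field F] (φ : ZMod p →+* F) (z c : F) :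
    ∏ a : ZMod p, (z - φ a * c) = z ^ p - c ^ (p - 1) * z := by
  have hp1 : 1 ≤ p := (Fact.out : p.Prime).one_lt.le
  by_cases hc : c = 0
  · subst hc
    simp only [mul_zero, sub_zero, zero_mul]
    rw [Finset.prod_const, Finset.card_univ, ZMod.card]
    rw [zero_pow (Nat.sub_ne_zero_of_lt (Fact.out : p.Prime).one_lt)]
    ring
  · have key : ∀ a : ZMod p, z - φ a * c = c * (z * c⁻¹ - φ a) := by
      intro a; field_simp
    rw [Finset.prod_congr rfl fun a _ => key a, Finset.prod_mul_distrib,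
      Finset.prod_const, Finset.card_univ, ZMod.card, prod_t_sub_phi]
    have hcp : c ^ p ≠ 0 := pow_ne_zero _ hc
    have hpc : c ^ p = c ^ (p - 1) * c := by rw [← pow_succ, Nat.sub_add_cancel hp1]
    rw [mul_sub]
    congr 1
    · rw [mul_pow, inv_pow, mul_comm (z ^ p), ← mul_assoc, mul_inv_cancel₀ hcp, one_mul]
    · rw [hpc]
      field_simp

lemma prod_linear_domain {R : Type*} [CommRing R] [IsDomain R] [CharP R p] (z c : R) :
    ∏ a : ZMod p, (z - (a.val : R) * c) = z ^ p - c ^ (p - 1) * z := by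
  have hinj := IsFractionRing.injective R (FractionRing R)
  haveI : CharP (FractionRing R) p := charP_of_injective_algebraMap hinj p
  apply hinj
  set j := algebraMap R (FractionRing R) with hj
  set φ : ZMod p →+* FractionRing R := ZMod.castHom (dvd_refl p) (FractionRing R) with hφ
  have hφval : ∀ a : ZMod p, φ a = ((a.val : ℕ) : FractionRing R) := by
    intro a
    rw [hφ, ZMod.castHom_apply, ← ZMod.natCast_val]
  rw [map_prod, map_sub, map_pow, map_mul, map_pow]
  calc ∏ a : ZMod p, j (z - (a.val : R) * c)
      = ∏ a : ZMod p, (j z - φ a * j c) := by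
        refine Finset.prod_congr rfl fun a _ => ?_
        rw [map_sub, map_mul, map_natCast, hφval]
    _ = (j z) ^ p - (j c) ^ (p - 1) * j z := prod_linear φ (j z) (j c)

end Stmt2Aux

/-- the factorization `f_k = f_{k-1}^p - C(h_k) · f_{k-1}`. -/
theorem stmt2 (p n : ℕ) [Fact p.Prime] (k : ℕ) (hk1 : 1 ≤ k) (hk2 : k ≤ n) :
    f p n k = (f p n (k - 1)) ^ p
      - Polynomial.C (hGen p n ⟨k - 1, by omega⟩) * f p n (k - 1) := by
  open Stmt2Aux in
  have hm : k - 1 < n := by omega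
  set m := k - 1 with hmdef
  have hmn : m ≤ n := by omega
  have hk : k = m + 1 := by omega
  set idx : Fin n := ⟨m, hm⟩ with hidx
  set P := f p n m with hP
  set e := P.eval (X idx) with he
  -- Step 1: decompose the product
  have step1 : f p n k = ∏ a : ZMod p,
      ∏ u ∈ V p n m, (Polynomial.X - Polynomial.C (u + C a * X idx)) := by
    rw [f, hk, V_succ hm, Finset.prod_image (fun x hx y hy h => injOn_phi hm hx hy h)]
    rw [Finset.prod_product]
  -- Step 2: each slice is a composition
  have step2 : ∀ a : ZMod p,
      ∏ u ∈ V p n m, (Polynomial.X - Polynomial.C (u + C a * X idx))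
        = P - Polynomial.C (P.eval (C a * X idx)) := by
    intro a
    have hc : ∀ u : MvPolynomial (Fin n) (ZMod p),
        Polynomial.X - Polynomial.C (u + C a * X idx)
          = (Polynomial.X - Polynomial.C u).comp
              (Polynomial.X - Polynomial.C (C a * X idx)) := by
      intro u
      simp [Polynomial.sub_comp, map_add]
      ring
    rw [Finset.prod_congr rfl fun u _ => hc u, ← Polynomial.prod_comp, ← f, ← hP,
      comp_X_sub_C hmn]
  -- Step 3: linearity of eval gives the scalar
  have step3 : ∀ a : ZMod p, P.eval (C a * X idx) = (a.val : ℕ) • e := by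
    intro a
    have hCa : (C a : MvPolynomial (Fin n) (ZMod p)) * X idx = (a.val : ℕ) • (X idx) := by
      rw [nsmul_eq_mul]
      congr 1
      rw [← map_natCast (C : ZMod p →+* MvPolynomial (Fin n) (ZMod p)) a.val]
      congr 1
      simp [ZMod.natCast_val, ZMod.cast_id]
    rw [hCa, hP, eval_f_nsmul hmn, he]
  -- Step 4: finish via the universal identity
  have step4 : f p n k = ∏ a : ZMod p,
      (P - ((a.val : ℕ) : Polynomial (MvPolynomial (Fin n) (ZMod p))) * Polynomial.C e) := by
    rw [step1, Finset.prod_congr rfl fun a _ => step2 a]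
    refine Finset.prod_congr rfl fun a _ => ?_
    rw [step3 a]
    congr 1
    rw [← nsmul_eq_mul, ← map_nsmul]
  rw [step4, prod_linear_domain (p := p) P (Polynomial.C e)]
  have hgen : hGen p n ⟨k - 1, by omega⟩ = e ^ (p - 1) := by
    rw [hGen]
  rw [hgen]
  rw [map_pow]
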